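/- Let (X, f_{1,∞}) be a periodic non-autonomous system on a Hausdorff space X with induced map g having a transitive point. If the set of topological equicontinuity points of (X, f_{1,∞}) is nonempty, then every transitive point of (X, f_{1,∞}) is a topological equicontinuity point. In particular, a minimal such system with a topological equicontinuity point is topologically equicontinuous. -/

import Mathlib

open Topology Filter Set
open scoped Uniformity

/-- `traj f n = f_n ∘ ⋯ ∘ f_1` (and `traj f 0 = id`), i.e. `f_1^n`. -/
def traj {X : Type*} (f : ℕ → X → X) : ℕ → X → X
  | 0 => id
  | n + 1 => f (n + 1) ∘ traj f n

/-- The family `f` is periodic with period `p`. -/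
def PeriodicFam {X : Type*} (f : ℕ → X → X) (p : ℕ) : Prop :=
  ∀ n, f (n + p) = f n

/-- A set of naturals is thick: it contains arbitrarily long blocks of consecutive integers. -/
def Thick (T : Set ℕ) : Prop :=
  ∀ k : ℕ, ∃ n : ℕ, ∀ i ≤ k, n + i ∈ T

/-- A set of naturals is syndetic: it has bounded gaps. -/
def Syndetic (S : Set ℕ) : Prop :=
  ∃ M : ℕ, ∀ n : ℕ, ∃ m ∈ S, n ≤ m ∧ m ≤ n + M

/-- `x` is a transitive point of the non-autonomous system `(X, f_{1,∞})`. -/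
def TransPt {X : Type*} [TopologicalSpace X] (f : ℕ → X → X) (x : X) : Prop :=
  Dense (Set.range fun n => traj f n x)

/-- `x` is a transitive point of the autonomous system `(X, g)`. -/
def TransPtAut {X : Type*} [TopologicalSpace X] (g : X → X) (x : X) : Prop :=
  Dense (Set.range fun n => g^[n] x)

/-- `x` is an equicontinuity point of `(X, f_{1,∞})` on a uniform space. -/
def EqPt {X : Type*} [UniformSpace X] (f : ℕ → X → X) (x : X) : Prop :=
  ∀ E ∈ 𝓤 X, ∃ D ∈ 𝓤 X, ∀ y : X, (x, y) ∈ D → ∀ n : ℕ, (traj f n x, traj f n y) ∈ E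

/-- `x` is a syndetically equicontinuous point of `(X, f_{1,∞})`. -/
def SynEqPt {X : Type*} [UniformSpace X] (f : ℕ → X → X) (x : X) : Prop :=
  ∀ E ∈ 𝓤 X, ∃ U ∈ 𝓝 x,
    Syndetic {n : ℕ | ∀ x₁ ∈ U, ∀ x₂ ∈ U, (traj f n x₁, traj f n x₂) ∈ E}

/-- `x` is a syndetically equicontinuous point of the autonomous system `(X, g)`. -/
def SynEqPtAut {X : Type*} [UniformSpace X] (g : X → X) (x : X) : Prop :=
  ∀ E ∈ 𝓤 X, ∃ U ∈ 𝓝 x,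
    Syndetic {n : ℕ | ∀ x₁ ∈ U, ∀ x₂ ∈ U, (g^[n] x₁, g^[n] x₂) ∈ E}

/-- `N(U, D)` for the non-autonomous system. -/
def NSet {X : Type*} (f : ℕ → X → X) (U : Set X) (D : Set (X × X)) : Set ℕ :=
  {n : ℕ | 0 < n ∧ ∃ x ∈ U, ∃ y ∈ U, (traj f n x, traj f n y) ∉ D}

/-- `N(U, D)` for the autonomous system. -/
def NSetAut {X : Type*} (g : X → X) (U : Set X) (D : Set (X × X)) : Set ℕ :=
  {n : ℕ | 0 < n ∧ ∃ x ∈ U, ∃ y ∈ U, (g^[n] x, g^[n] y) ∉ D}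

/-- Sensitivity of `(X, f_{1,∞})`. -/
def Sensitive {X : Type*} [UniformSpace X] (f : ℕ → X → X) : Prop :=
  ∃ D ∈ 𝓤 X, ∀ U : Set X, IsOpen U → U.Nonempty → (NSet f U D).Nonempty

/-- Thick sensitivity of `(X, f_{1,∞})`. -/
def ThickSensitive {X : Type*} [UniformSpace X] (f : ℕ → X → X) : Prop :=
  ∃ D ∈ 𝓤 X, ∀ U : Set X, IsOpen U → U.Nonempty → Thick (NSet f U D)

/-- Thick sensitivity of the autonomous system `(X, g)`. -/
def ThickSensitiveAut {X : Type*} [UniformSpace X] (g : X → X) : Prop :=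
  ∃ D ∈ 𝓤 X, ∀ U : Set X, IsOpen U → U.Nonempty → Thick (NSetAut g U D)

/-- Multi-sensitivity of `(X, f_{1,∞})`. -/
def MultiSensitive {X : Type*} [UniformSpace X] (f : ℕ → X → X) : Prop :=
  ∃ D ∈ 𝓤 X, ∀ (k : ℕ) (U : Fin (k + 1) → Set X),
    (∀ i, IsOpen (U i)) → (∀ i, (U i).Nonempty) → (⋂ i, NSet f (U i) D).Nonempty

/-- Multi-sensitivity of the autonomous system `(X, g)`. -/
def MultiSensitiveAut {X : Type*} [UniformSpace X] (g : X → X) : Prop :=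
  ∃ D ∈ 𝓤 X, ∀ (k : ℕ) (U : Fin (k + 1) → Set X),
    (∀ i, IsOpen (U i)) → (∀ i, (U i).Nonempty) → (⋂ i, NSetAut g (U i) D).Nonempty

/-- Eventual sensitivity of `(X, f_{1,∞})` with a given entourage `D`. -/
def EvSensitiveWith {X : Type*} [UniformSpace X] (f : ℕ → X → X) (D : Set (X × X)) : Prop :=
  ∀ x : X, ∀ E ∈ 𝓤 X, ∃ n k : ℕ, 0 < n ∧ 0 < k ∧
    ∃ y : X, (traj f n x, y) ∈ E ∧ (traj f (n + k) x, traj f k y) ∉ D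

/-- Eventual sensitivity of `(X, f_{1,∞})`. -/
def EvSensitive {X : Type*} [UniformSpace X] (f : ℕ → X → X) : Prop :=
  ∃ D ∈ 𝓤 X, EvSensitiveWith f D

/-- Eventual sensitivity of the autonomous system `(X, g)` with entourage `D`. -/
def EvSensitiveAutWith {X : Type*} [UniformSpace X] (g : X → X) (D : Set (X × X)) : Prop :=
  ∀ x : X, ∀ E ∈ 𝓤 X, ∃ q k : ℕ, 0 < q ∧ 0 < k ∧
    ∃ y : X, (g^[q] x, y) ∈ E ∧ (g^[q + k] x, g^[k] y) ∉ D

/-- `(x, y)` is a (topological) equicontinuity pair for `(X, f_{1,∞})`. -/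
def EqPair {X : Type*} [TopologicalSpace X] (f : ℕ → X → X) (x y : X) : Prop :=
  ∀ O ∈ 𝓝 y, ∃ U ∈ 𝓝 x, ∃ V ∈ 𝓝 y, ∀ n : ℕ, 0 < n →
    ((traj f n '' U) ∩ V).Nonempty → traj f n '' U ⊆ O

/-- `(x, y)` is a syndetic equicontinuity pair for `(X, f_{1,∞})`. -/
def SynEqPair {X : Type*} [TopologicalSpace X] (f : ℕ → X → X) (x y : X) : Prop :=
  ∀ O ∈ 𝓝 y, ∃ U ∈ 𝓝 x, ∃ V ∈ 𝓝 y,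
    Syndetic {n : ℕ | ((traj f n '' U) ∩ V).Nonempty → traj f n '' U ⊆ O}

/-- `O` is a splitting neighborhood of `y` with respect to `x`. -/
def SplittingNbhd {X : Type*} [TopologicalSpace X] (f : ℕ → X → X) (x y : X) (O : Set X) :
    Prop :=
  O ∈ 𝓝 y ∧ ∀ U ∈ 𝓝 x, ∀ V ∈ 𝓝 y, ∃ n : ℕ, 0 < n ∧
    ((traj f n '' U) ∩ V).Nonempty ∧ ¬ traj f n '' U ⊆ O

/-- A finite open cover of `X`. -/
def IsFinOpenCover {X : Type*} [TopologicalSpace X] (𝒰 : Finset (Set X)) : Prop :=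
  (∀ U ∈ 𝒰, IsOpen U) ∧ ⋃₀ (↑𝒰 : Set (Set X)) = Set.univ

/-- `N(V, 𝒰)`: times at which `f_1^n(V)` is not contained in any single member of `𝒰`. -/
def HNSet {X : Type*} (f : ℕ → X → X) (V : Set X) (𝒰 : Finset (Set X)) : Set ℕ :=
  {n : ℕ | 0 < n ∧ ∀ U ∈ 𝒰, ¬ traj f n '' V ⊆ U}

/-- `N(V, 𝒰)` for the autonomous system. -/
def HNSetAut {X : Type*} (g : X → X) (V : Set X) (𝒰 : Finset (Set X)) : Set ℕ :=
  {n : ℕ | 0 < n ∧ ∀ U ∈ 𝒰, ¬ g^[n] '' V ⊆ U}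

/-- Hausdorff sensitivity of `(X, f_{1,∞})`. -/
def HSensitive {X : Type*} [TopologicalSpace X] (f : ℕ → X → X) : Prop :=
  ∃ 𝒰 : Finset (Set X), IsFinOpenCover 𝒰 ∧
    ∀ V : Set X, IsOpen V → V.Nonempty → (HNSet f V 𝒰).Nonempty

/-- Hausdorff sensitivity of the autonomous system `(X, g)`. -/
def HSensitiveAut {X : Type*} [TopologicalSpace X] (g : X → X) : Prop :=
  ∃ 𝒰 : Finset (Set X), IsFinOpenCover 𝒰 ∧
    ∀ V : Set X, IsOpen V → V.Nonempty → (HNSetAut g V 𝒰).Nonempty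

/-- Thick Hausdorff sensitivity of `(X, f_{1,∞})`. -/
def ThickHSensitive {X : Type*} [TopologicalSpace X] (f : ℕ → X → X) : Prop :=
  ∃ 𝒰 : Finset (Set X), IsFinOpenCover 𝒰 ∧
    ∀ V : Set X, IsOpen V → V.Nonempty → Thick (HNSet f V 𝒰)

/-- Thick Hausdorff sensitivity of the autonomous system `(X, g)`. -/
def ThickHSensitiveAut {X : Type*} [TopologicalSpace X] (g : X → X) : Prop :=
  ∃ 𝒰 : Finset (Set X), IsFinOpenCover 𝒰 ∧
    ∀ V : Set X, IsOpen V → V.Nonempty → Thick (HNSetAut g V 𝒰)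

/-- Multi-Hausdorff sensitivity of the autonomous system `(X, g)`. -/
def MultiHSensitiveAut {X : Type*} [TopologicalSpace X] (g : X → X) : Prop :=
  ∃ 𝒰 : Finset (Set X), IsFinOpenCover 𝒰 ∧
    ∀ (m : ℕ) (V : Fin (m + 1) → Set X),
      (∀ i, IsOpen (V i)) → (∀ i, (V i).Nonempty) → (⋂ i, HNSetAut g (V i) 𝒰).Nonempty


namespace AuxTPTE

lemma traj_add {X : Type*} (f : ℕ → X → X) (m s : ℕ) :
    traj f (m + s) = traj (fun j => f (j + m)) s ∘ traj f m := by
  induction s with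
  | zero => rfl
  | succ s ih =>
      have h1 : traj f (m + (s+1)) = f (s + 1 + m) ∘ traj f (m + s) := by
        show traj f ((m+s)+1) = _
        have : m + s + 1 = s + 1 + m := by ring
        simp [traj, this]
      rw [h1, ih]; rfl

lemma period_mul {X : Type*} {f : ℕ → X → X} {p : ℕ} (hper : PeriodicFam f p)
    (j k : ℕ) : f (j + k * p) = f j := by
  induction k with
  | zero => simp
  | succ k ih =>
      have : j + (k+1)*p = (j + k*p) + p := by ring
      rw [this, hper]; exact ih

lemma traj_iterate {X : Type*} {f : ℕ → X → X} {p : ℕ} (hper : PeriodicFam f p)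
    (k : ℕ) : traj f (k * p) = (traj f p)^[k] := by
  induction k with
  | zero => simp [traj]
  | succ k ih =>
      have h : (k+1) * p = k * p + p := by ring
      have h2 : (fun j => f (j + k * p)) = f := by
        funext j; exact period_mul hper j k
      rw [h, traj_add, h2, Function.iterate_succ', ih]

lemma traj_continuous {X : Type*} [TopologicalSpace X] {f : ℕ → X → X}
    (hf : ∀ n, Continuous (f n)) (n : ℕ) : Continuous (traj f n) := by
  induction n with
  | zero => exact continuous_id
  | succ n ih => exact (hf (n+1)).comp ih

/-- The restart identity: after a full number of periods the trajectory maps restart. -/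
lemma traj_restart {X : Type*} {f : ℕ → X → X} {p : ℕ} (hper : PeriodicFam f p)
    (k n : ℕ) (w : X) : traj f (k * p + n) w = traj f n (traj f (k*p) w) := by
  have h2 : (fun j => f (j + k * p)) = f := by
    funext j; exact period_mul hper j k
  rw [traj_add, h2]; rfl

/-- THE MAIN TEMPLATE: if `w` is a topological equicontinuity point of the `r`-shifted
system, and the `r`-phase orbit of `x` accumulates at `w`, then `(x, y)` is an
equicontinuity pair for every `y`. -/
lemma template {X : Type*} [TopologicalSpace X] [T2Space X]
    {f : ℕ → X → X} (hf : ∀ n, Continuous (f n))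
    {p : ℕ} (hper : PeriodicFam f p)
    (x : X) (r : ℕ) (w : X)
    (hw : ∀ y : X, EqPair (fun j => f (j + r)) w y)
    (hacc : ∀ U ∈ 𝓝 w, ∃ k : ℕ, traj f (k * p + r) x ∈ U)
    (y : X) : EqPair f x y := by
  intro O hO
  obtain ⟨U, hU, V₀, hV₀, hP⟩ := hw y O hO
  obtain ⟨k, hk⟩ := hacc (interior U) (interior_mem_nhds.mpr hU)
  set M : ℕ := k * p + r with hM
  have hW₀ : (traj f M) ⁻¹' (interior U) ∈ 𝓝 x :=
    (traj_continuous hf M).continuousAt.preimage_mem_nhds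
      (isOpen_interior.mem_nhds hk)
  have hyO : y ∈ interior O := mem_interior_iff_mem_nhds.mpr hO
  have hfin : ∀ n : ℕ, ∃ W ∈ 𝓝 x, ∃ B ∈ 𝓝 y,
      (traj f n '' W ⊆ O) ∨ (Disjoint (traj f n '' W) B) := by
    intro n
    by_cases hc : traj f n x ∈ interior O
    · refine ⟨(traj f n) ⁻¹' (interior O),
        (traj_continuous hf n).continuousAt.preimage_mem_nhds (isOpen_interior.mem_nhds hc),
        univ, univ_mem, Or.inl ?_⟩
      rintro _ ⟨u, hu, rfl⟩
      exact interior_subset hu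
    · have hne : traj f n x ≠ y := fun h => hc (h ▸ hyO)
      obtain ⟨A, B, hAo, hBo, hxA, hyB, hAB⟩ := t2_separation hne
      refine ⟨(traj f n) ⁻¹' A,
        (traj_continuous hf n).continuousAt.preimage_mem_nhds (hAo.mem_nhds hxA),
        B, hBo.mem_nhds hyB, Or.inr ?_⟩
      refine Set.disjoint_left.mpr ?_
      rintro _ ⟨u, hu, rfl⟩ hvB
      exact Set.disjoint_left.mp hAB hu hvB
  choose W hW B hB hWB using hfin
  refine ⟨(traj f M) ⁻¹' (interior U) ∩ ⋂ n ∈ Finset.Icc 1 M, W n, ?_,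
    V₀ ∩ ⋂ n ∈ Finset.Icc 1 M, B n, ?_, ?_⟩
  · exact Filter.inter_mem hW₀ ((Filter.biInter_finset_mem _).mpr fun n _ => hW n)
  · exact Filter.inter_mem hV₀ ((Filter.biInter_finset_mem _).mpr fun n _ => hB n)
  · intro n hn hne
    by_cases hnM : n ≤ M
    · have hmem : n ∈ Finset.Icc 1 M := Finset.mem_Icc.mpr ⟨hn, hnM⟩
      have hsubW : ((traj f M) ⁻¹' (interior U) ∩ ⋂ m ∈ Finset.Icc 1 M, W m) ⊆ W n :=
        fun u hu => (Set.mem_iInter₂.mp hu.2) n hmem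
      rcases hWB n with h | h
      · exact fun v hv => h (Set.image_mono hsubW hv)
      · exfalso
        obtain ⟨v, hv1, hv2⟩ := hne
        have hvW : v ∈ traj f n '' W n := Set.image_mono hsubW hv1
        have hvB : v ∈ B n := (Set.mem_iInter₂.mp hv2.2) n hmem
        exact Set.disjoint_left.mp h hvW hvB
    · push_neg at hnM
      obtain ⟨s, rfl⟩ : ∃ s, n = M + s := ⟨n - M, by omega⟩
      have hs : 0 < s := by omega
      have hshift : (fun j => f (j + M)) = (fun j => f (j + r)) := by
        funext j
        have : j + M = (j + r) + k * p := by rw [hM]; ring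
        rw [this, period_mul hper]
      have hcomp : traj f (M + s) = traj (fun j => f (j + r)) s ∘ traj f M := by
        rw [traj_add, hshift]
      have himg : traj f (M+s) '' ((traj f M) ⁻¹' (interior U) ∩ ⋂ m ∈ Finset.Icc 1 M, W m)
          ⊆ traj (fun j => f (j + r)) s '' U := by
        rintro _ ⟨u, hu, rfl⟩
        rw [hcomp]
        exact ⟨traj f M u, interior_subset hu.1, rfl⟩
      obtain ⟨v, hv1, hv2⟩ := hne
      have hmeet : ((traj (fun j => f (j + r)) s '' U) ∩ V₀).Nonempty :=
        ⟨v, himg hv1, hv2.1⟩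
      exact fun v hv => hP s hs hmeet (himg hv)

/-- an isolated point is a topological equicontinuity point of any system. -/
lemma isolated_eqPair {X : Type*} [TopologicalSpace X] {w : X}
    (hw : IsOpen ({w} : Set X)) (F : ℕ → X → X) (y : X) : EqPair F w y := by
  intro O hO
  refine ⟨{w}, hw.mem_nhds rfl, interior O, interior_mem_nhds.mpr hO, ?_⟩
  intro n _ hne
  obtain ⟨v, ⟨u, hu, hv⟩, hvO⟩ := hne
  have hu' : u = w := hu
  subst hu'
  rintro _ ⟨u', hu', rfl⟩
  have h2 : u' = u := hu'
  subst h2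
  rw [hv]
  exact interior_subset hvO

/-- no isolated points ⇒ dense sequences have dense tails. -/
lemma tail_dense {X : Type*} [TopologicalSpace X] [T1Space X]
    (hnoiso : ∀ w : X, ¬ IsOpen ({w} : Set X))
    {s : ℕ → X} (hd : Dense (Set.range s)) (U : Set X) (hUo : IsOpen U)
    (hUne : U.Nonempty) (K : ℕ) : ∃ m, K ≤ m ∧ s m ∈ U := by
  classical
  set F : Set X := s '' {m | m < K} with hF
  have hFfin : F.Finite := Set.Finite.image _ (Set.finite_lt_nat K)
  have hU' : IsOpen (U \ F) := hUo.sdiff hFfin.isClosed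
  by_cases hne : (U \ F).Nonempty
  · obtain ⟨v, ⟨m, hm⟩, hv⟩ := hd.exists_mem_open hU' hne
    refine ⟨m, ?_, ?_⟩
    · by_contra h
      push_neg at h
      exact hv.2 ⟨m, h, hm⟩
    · rw [hm]; exact hv.1
  · exfalso
    rw [Set.not_nonempty_iff_eq_empty, Set.diff_eq_empty] at hne
    obtain ⟨u, hu⟩ := hUne
    have hC : IsClosed ((F \ {u} : Set X)) := (hFfin.subset (Set.diff_subset)).isClosed
    have hopen : IsOpen (U \ (F \ {u})) := hUo.sdiff hC
    have heq : (U \ (F \ {u})) = {u} := by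
      apply Set.eq_singleton_iff_unique_mem.mpr
      constructor
      · exact ⟨hu, fun h => h.2 rfl⟩
      · rintro v ⟨hvU, hv2⟩
        by_contra hvu
        exact hv2 ⟨hne hvU, hvu⟩
    exact hnoiso u (heq ▸ hopen)

/-- THE FACTORY: orbit points of a point whose restart tails accumulate at the TE point `z`
are topological equicontinuity points of the correspondingly-shifted system. -/
lemma factory {X : Type*} [TopologicalSpace X] [T2Space X]
    {f : ℕ → X → X} (hf : ∀ n, Continuous (f n))
    {p : ℕ} (hp : 0 < p) (hper : PeriodicFam f p)
    (z x₀ : X) (hz : ∀ y, EqPair f z y)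
    (htail : ∀ U ∈ 𝓝 z, ∀ K : ℕ, ∃ m, K ≤ m ∧ traj f (m * p) x₀ ∈ U)
    (r k : ℕ) (hr : r < p) :
    ∀ y, EqPair (fun j => f (j + r)) (traj f (k * p + r) x₀) y := by
  set F : ℕ → X → X := fun j => f (j + r) with hFdef
  have hFc : ∀ n, Continuous (F n) := fun n => hf _
  have hFper : PeriodicFam F p := by
    intro n; show f (n + p + r) = f (n + r)
    rw [show n+p+r = (n+r)+p by ring, hper]
  set c : ℕ := p - r with hc
  have hFc_eq : (fun j => F (j + c)) = f := by
    funext j; show f (j + c + r) = f j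
    rw [show j + c + r = j + p by omega, hper]
  intro y
  apply template hFc hFper (traj f (k*p+r) x₀) c z
  · rw [hFc_eq]; exact hz
  · intro U hU
    obtain ⟨m, hm1, hm2⟩ := htail U hU (k + 1)
    refine ⟨m - k - 1, ?_⟩
    have hcomp : ∀ t, traj F t (traj f (k*p + r) x₀) = traj f (k*p + r + t) x₀ := by
      intro t
      have hshift : (fun j => f (j + (k*p + r))) = F := by
        funext j; show f (j + (k*p+r)) = f (j + r)
        rw [show j + (k*p+r) = (j + r) + k*p by ring, period_mul hper]
      rw [traj_add f (k*p+r) t, hshift]; rfl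
    rw [hcomp]
    have harith : k*p + r + ((m - k - 1) * p + c) = m * p := by
      calc k*p + r + ((m - k - 1)*p + c)
          = k*p + (m - k - 1)*p + (r + c) := by ring
        _ = k*p + (m - k - 1)*p + p := by rw [show r + c = p by omega]
        _ = (k + (m - k - 1) + 1) * p := by ring
        _ = m * p := by rw [show k + (m - k - 1) + 1 = m by omega]
    rw [harith]
    exact hm2

/-- In the no-isolated-point case, the restart orbit of the TE point `z`
visits every open set at arbitrarily large restart times. -/
lemma z_restart_dense {X : Type*} [TopologicalSpace X] [T2Space X]
    {f : ℕ → X → X} {p : ℕ} (hp : 0 < p) (hper : PeriodicFam f p)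
    (hnoiso : ∀ w : X, ¬ IsOpen ({w} : Set X))
    (z x₀ : X) (hz : ∀ y, EqPair f z y)
    (hrestart : Dense (Set.range fun m : ℕ => traj f (m * p) x₀)) :
    ∀ (y : X), ∀ O ∈ 𝓝 y, ∀ K : ℕ, ∃ m, K ≤ m ∧ traj f (m * p) z ∈ O := by
  intro y O hO K
  obtain ⟨U, hU, V, hV, hP⟩ := hz y O hO
  obtain ⟨u, ⟨j, hj⟩, hu⟩ := hrestart.exists_mem_open isOpen_interior
    ⟨z, mem_interior_iff_mem_nhds.mpr hU⟩
  have hj' : traj f (j * p) x₀ = u := hj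
  obtain ⟨j', hj'1, hj'2⟩ := tail_dense hnoiso hrestart (interior V) isOpen_interior
    ⟨y, mem_interior_iff_mem_nhds.mpr hV⟩ (j + K + 1)
  set n : ℕ := (j' - j) * p with hn
  have hnpos : 0 < n := by
    have : 0 < j' - j := by omega
    exact Nat.mul_pos this hp
  have hfire : ((traj f n '' U) ∩ V).Nonempty := by
    refine ⟨traj f (j' * p) x₀, ⟨traj f (j * p) x₀, ?_, ?_⟩, interior_subset hj'2⟩
    · rw [hj']; exact interior_subset hu
    · rw [← traj_restart hper j n]
      have he : j * p + n = j' * p := by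
        rw [hn, ← Nat.add_mul]
        congr 1
        omega
      rw [he]
  have hsub := hP n hnpos hfire
  refine ⟨j' - j, by omega, ?_⟩
  exact hsub ⟨z, mem_of_mem_nhds hU, rfl⟩

/-- X is covered by the phase-orbit closures of a transitive point. -/
lemma phase_cover {X : Type*} [TopologicalSpace X] {f : ℕ → X → X} {p : ℕ} (hp : 0 < p)
    {x : X} (hx : TransPt f x) (w : X) :
    ∃ c, c < p ∧ w ∈ closure (Set.range fun k : ℕ => traj f (k * p + c) x) := by
  by_contra h
  push_neg at h
  set W : Set X := ⋂ c ∈ Finset.range p,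
    (closure (Set.range fun k : ℕ => traj f (k * p + c) x))ᶜ with hW
  have hWopen : IsOpen W :=
    isOpen_biInter_finset fun c _ => isClosed_closure.isOpen_compl
  have hwW : w ∈ W := by
    rw [hW]
    refine Set.mem_iInter₂.mpr fun c hc => ?_
    exact h c (Finset.mem_range.mp hc)
  obtain ⟨v, ⟨n, hn⟩, hv⟩ := hx.exists_mem_open hWopen ⟨w, hwW⟩
  have hn' : traj f n x = v := hn
  have hmem : v ∈ Set.range fun k : ℕ => traj f (k * p + n % p) x := by
    refine ⟨n / p, ?_⟩
    show traj f (n / p * p + n % p) x = v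
    have harith : n / p * p + n % p = n := by rw [mul_comm]; exact Nat.div_add_mod n p
    rw [harith]; exact hn'
  have hvW := Set.mem_iInter₂.mp hv (n % p) (Finset.mem_range.mpr (Nat.mod_lt n hp))
  exact hvW (subset_closure hmem)

/-- Some phase-orbit closure has nonempty interior. -/
lemma phase_interior {X : Type*} [TopologicalSpace X] [Nonempty X]
    {f : ℕ → X → X} {p : ℕ} (hp : 0 < p)
    {x : X} (hx : TransPt f x) :
    ∃ c, c < p ∧
      (interior (closure (Set.range fun k : ℕ => traj f (k * p + c) x))).Nonempty := by
  by_contra hempty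
  push_neg at hempty
  set D : ℕ → Set X := fun c => closure (Set.range fun k : ℕ => traj f (k * p + c) x) with hD
  have hclosed : ∀ c, IsClosed (D c) := fun c => isClosed_closure
  have hint : ∀ c, c < p → interior (D c) = ∅ := by
    intro c hc
    exact hempty c hc
  have key : ∀ S : Finset ℕ, (∀ c ∈ S, c < p) →
      (∀ w : X, ∃ c ∈ S, w ∈ D c) → False := by
    intro S
    induction S using Finset.induction with
    | empty =>
        intro _ hcov
        obtain ⟨c, hc, _⟩ := hcov (Classical.arbitrary X)
        exact absurd hc (Finset.notMem_empty c)
    | @insert c₀ S hc₀S ih =>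
        intro hSp hcov
        refine ih (fun c hc => hSp c (Finset.mem_insert_of_mem hc)) ?_
        intro w
        by_contra hw
        push_neg at hw
        set T : Set X := ⋂ c ∈ S, (D c)ᶜ with hT
        have hTopen : IsOpen T := isOpen_biInter_finset fun c _ => (hclosed c).isOpen_compl
        have hwT : w ∈ T := Set.mem_iInter₂.mpr fun c hc => hw c hc
        have hTsub : T ⊆ D c₀ := by
          intro v hv
          obtain ⟨c, hc, hvc⟩ := hcov v
          rcases Finset.mem_insert.mp hc with rfl | hcS
          · exact hvc
          · exact absurd hvc (Set.mem_iInter₂.mp hv c hcS)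
        have hTint : T ⊆ interior (D c₀) := interior_maximal hTsub hTopen
        rw [hint c₀ (hSp c₀ (Finset.mem_insert_self c₀ S))] at hTint
        exact hTint hwT
  apply key (Finset.range p) (fun c hc => Finset.mem_range.mp hc)
  intro w
  obtain ⟨c, hc, hw⟩ := phase_cover hp hx w
  exact ⟨c, Finset.mem_range.mpr hc, hw⟩

end AuxTPTE

theorem transPt_topEq {X : Type*} [TopologicalSpace X] [T2Space X]
    (f : ℕ → X → X) (hf : ∀ n, Continuous (f n))
    (p : ℕ) (hp : 0 < p) (hper : PeriodicFam f p)
    (htrans : ∃ x, TransPtAut (traj f p) x)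
    (hTEq : ∃ z : X, ∀ y : X, EqPair f z y) :
    (∀ x : X, TransPt f x → ∀ y : X, EqPair f x y) ∧
    ((∀ x : X, TransPt f x) → ∀ x y : X, EqPair f x y) := by
  classical
  obtain ⟨x₀, hx₀⟩ := htrans
  obtain ⟨z, hz⟩ := hTEq
  have main : ∀ x : X, TransPt f x → ∀ y : X, EqPair f x y := by
    intro x hx
    have need : ∃ (r : ℕ) (w : X), (∀ y : X, EqPair (fun j => f (j + r)) w y) ∧
        (∀ U ∈ 𝓝 w, ∃ k : ℕ, traj f (k * p + r) x ∈ U) := by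
      by_cases hiso : ∃ w : X, IsOpen ({w} : Set X)
      · -- there is an isolated point: it lies on the orbit of x and is a trivial anchor
        obtain ⟨ι, hι⟩ := hiso
        obtain ⟨v, ⟨n, hn⟩, hv⟩ := hx.exists_mem_open hι ⟨ι, rfl⟩
        have hn' : traj f n x = v := hn
        have hvι : v = ι := hv
        refine ⟨n % p, ι, fun y => AuxTPTE.isolated_eqPair hι _ y, ?_⟩
        intro U hU
        refine ⟨n / p, ?_⟩
        have harith : n / p * p + n % p = n := by
          rw [mul_comm]; exact Nat.div_add_mod n p
        rw [harith, hn', hvι]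
        exact mem_of_mem_nhds hU
      · -- no isolated points
        push_neg at hiso
        haveI : Nonempty X := ⟨z⟩
        have hrestart : Dense (Set.range fun m : ℕ => traj f (m * p) x₀) := by
          have he : (fun m : ℕ => traj f (m*p) x₀) = (fun m => (traj f p)^[m] x₀) := by
            funext m; rw [AuxTPTE.traj_iterate hper]
          rw [he]; exact hx₀
        -- the restart orbit of z is dense
        have hzdense := AuxTPTE.z_restart_dense hp hper hiso z x₀ hz hrestart
        have htailz : ∀ U ∈ 𝓝 z, ∀ K : ℕ, ∃ m, K ≤ m ∧ traj f (m * p) z ∈ U :=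
          fun U hU K => hzdense z U hU K
        -- some phase-orbit closure of x has nonempty interior
        obtain ⟨c, hcp, v, hv⟩ := AuxTPTE.phase_interior hp hx
        set D : Set X := closure (Set.range fun k : ℕ => traj f (k * p + c) x) with hD
        -- interior D meets the range of traj f c
        have hrange : (Set.range fun k : ℕ => traj f (k * p + c) x) ⊆
            Set.range (traj f c) := by
          rintro _ ⟨k, rfl⟩
          exact ⟨traj f (k*p) x, (AuxTPTE.traj_restart hper k c x).symm⟩
        have hsub : D ⊆ closure (Set.range (traj f c)) := closure_mono hrange
        have hmeet : ∃ w₀ : X, traj f c w₀ ∈ interior D := by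
          by_contra hno
          push_neg at hno
          have h1 : Set.range (traj f c) ⊆ (interior D)ᶜ := by
            rintro _ ⟨w₀, rfl⟩; exact hno w₀
          have h2 : closure (Set.range (traj f c)) ⊆ (interior D)ᶜ :=
            closure_minimal h1 isOpen_interior.isClosed_compl
          exact h2 (hsub (interior_subset hv)) hv
        obtain ⟨w₀, hw₀⟩ := hmeet
        have hΩ : (traj f c)⁻¹' (interior D) ∈ 𝓝 w₀ :=
          (AuxTPTE.traj_continuous hf c).continuousAt.preimage_mem_nhds
            (isOpen_interior.mem_nhds hw₀)
        obtain ⟨m, _, hm⟩ := hzdense w₀ _ hΩ 0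
        refine ⟨c, traj f (m*p + c) z,
          AuxTPTE.factory hf hp hper z z hz htailz c m hcp, ?_⟩
        intro U hU
        have hwD : traj f (m*p+c) z ∈ interior D := by
          rw [AuxTPTE.traj_restart hper m c z]
          exact hm
        have hwU : traj f (m*p+c) z ∈ interior U := mem_interior_iff_mem_nhds.mpr hU
        have hmeetU := mem_closure_iff.mp (interior_subset hwD) (interior U)
          isOpen_interior hwU
        obtain ⟨pt, hptU, k, hk⟩ := hmeetU
        have hk' : traj f (k * p + c) x = pt := hk
        exact ⟨k, by rw [hk']; exact interior_subset hptU⟩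
    obtain ⟨r, w, hw, hacc⟩ := need
    exact fun y => AuxTPTE.template hf hper x r w hw hacc y
  exact ⟨main, fun h x y => main x (h x) y⟩
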